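/- Let F be the free group on free generators e_1, …, e_n with n ≥ 2, and let B = ⟨e_1⟩ be the cyclic subgroup generated by e_1 (which equals the centralizer C(e_1)). Then the union of all conjugates of B, namely ⋃_{g ∈ F} g⁻¹·B·g = {g⁻¹·e_1^m·g : g ∈ F, m ∈ ℤ}, is a negligible subset of F. -/

import Mathlib

open FirstOrder

/-- The formal inverse of a word (as a list of letters with exponents ±1). -/
def invWord {α : Type*} (u : List (α × Bool)) : List (α × Bool) :=
  (u.map fun x => (x.1, !x.2)).reverse

/-- `s = (p, u)` is an embedded subword of (the reduced word of) `w`: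
`u` is a nonempty word occurring as the contiguous block of letters of the
reduced word of `w` starting at position `p`. -/
def IsEmbeddedSubword {α : Type*} [DecidableEq α] (w : FreeGroup α)
    (s : ℕ × List (α × Bool)) : Prop :=
  s.2 ≠ [] ∧ (w.toWord.drop s.1).take s.2.length = s.2

/-- A proper embedded subword of `w` is an embedded subword which is not all of `w`. -/
def IsProperEmbeddedSubword {α : Type*} [DecidableEq α] (w : FreeGroup α)
    (s : ℕ × List (α × Bool)) : Prop :=
  IsEmbeddedSubword w s ∧ s.2.length < w.toWord.length

/-- Position `j` (a letter of the reduced word) is covered by the embedded subword `s`. -/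
def CoversPos {α : Type*} (s : ℕ × List (α × Bool)) (j : ℕ) : Prop :=
  s.1 ≤ j ∧ j < s.1 + s.2.length

/-- A subset `X` of a free group is negligible if there is `N : ℕ` such that for every
`ε > 0`, all but finitely many `w ∈ X` admit `N` pairs of proper embedded subwords
`(w_i, w_i')` with `w_i'` equal to `w_i` or to its inverse word, `w_i ≠ w_i'` as embedded
subwords, and such that the positions of `w` not covered by any of them number at most
`ε · length w`. -/
def Negligible {α : Type*} [DecidableEq α] (X : Set (FreeGroup α)) : Prop :=
  ∃ N : ℕ, ∀ ε : ℝ, 0 < ε → ∃ S : Finset (FreeGroup α),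
    ∀ w ∈ X, w ∉ S →
      ∃ sub : Fin N → (ℕ × List (α × Bool)) × (ℕ × List (α × Bool)),
        (∀ i, IsProperEmbeddedSubword w (sub i).1 ∧ IsProperEmbeddedSubword w (sub i).2) ∧
        (∀ i, (sub i).2.2 = (sub i).1.2 ∨ (sub i).2.2 = invWord (sub i).1.2) ∧
        (∀ i, (sub i).1 ≠ (sub i).2) ∧
        (({j : ℕ | j < w.toWord.length ∧
            ∀ i, ¬ CoversPos ((sub i).1) j ∧ ¬ CoversPos ((sub i).2) j}.ncard : ℝ)
          ≤ ε * w.toWord.length)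

/-- The functions of the first-order language of groups:
a constant `1`, a unary function `⁻¹` and a binary function `·`. -/
def groupFunctions : ℕ → Type
  | 0 => Unit
  | 1 => Unit
  | 2 => Unit
  | _ => Empty

/-- The first-order language of groups `(·, ⁻¹, 1)`. -/
def groupLang : Language := ⟨groupFunctions, fun _ => Empty⟩

/-- Any group is a structure for the language of groups in the natural way. -/
instance groupLangStructure (G : Type*) [Group G] : groupLang.Structure G where
  funMap {n} f x :=
    match n, f with
    | 0, _ => 1
    | 1, _ => (x 0)⁻¹
    | 2, _ => x 0 * x 1
    | (_ + 3), f => f.elim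
  RelMap {n} r _ := r.elim

/-- A subset of a group is definable if it is defined, with parameters, by a first-order
formula in the language of groups. -/
def IsDefinable {G : Type*} [Group G] (X : Set G) : Prop :=
  Set.Definable₁ (Set.univ : Set G) groupLang X

/-- A subset `X` of a group is (left) generic if finitely many left translates of `X`
cover the group. -/
def Generic {G : Type*} [Group G] (X : Set G) : Prop :=
  ∃ s : Finset G, ∀ x : G, ∃ g ∈ s, g⁻¹ * x ∈ X

set_option linter.unusedSectionVars false

namespace Aux

variable {α : Type*} [DecidableEq α]

lemma invWord_eq_invRev (u : List (α × Bool)) : invWord u = FreeGroup.invRev u := rfl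

/-- The no-cancellation relation between adjacent letters. -/
def R : (α × Bool) → (α × Bool) → Prop := fun x y => ¬(x.1 = y.1 ∧ x.2 = !y.2)

lemma reduce_eq_self_of_chain : ∀ {L : List (α × Bool)}, List.Chain' R L →
    FreeGroup.reduce L = L := by
  intro L
  induction L with
  | nil => intro; rfl
  | cons x t ih =>
    intro h
    rw [List.Chain', List.isChain_cons] at h
    rw [FreeGroup.reduce.cons, ih h.2]
    cases t with
    | nil => rfl
    | cons y s =>
      have hR : R x y := h.1 y rfl
      simp only [R] at hR
      show (if x.1 = y.1 ∧ x.2 = !y.2 then s else x :: y :: s) = x :: y :: s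
      rw [if_neg hR]

lemma chain_of_reduce_eq_self : ∀ {L : List (α × Bool)},
    FreeGroup.reduce L = L → List.Chain' R L := by
  intro L
  induction L with
  | nil => intro; exact List.isChain_nil
  | cons x t ih =>
    intro h
    rw [FreeGroup.reduce.cons] at h
    rcases hr : FreeGroup.reduce t with _ | ⟨y, s⟩
    · rw [hr] at h
      change [x] = x :: t at h
      injection h with _ h2
      subst h2
      exact List.isChain_singleton x
    · rw [hr] at h
      change (if x.1 = y.1 ∧ x.2 = !y.2 then s else x :: y :: s) = x :: t at h
      by_cases hc : x.1 = y.1 ∧ x.2 = !y.2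
      · rw [if_pos hc] at h
        exfalso
        have h1 : s.length + 1 ≤ t.length := by
          have := FreeGroup.Red.length_le (FreeGroup.reduce.red (L := t))
          rw [hr] at this
          simpa using this
        have h2 := congrArg List.length h
        simp at h2
        omega
      · rw [if_neg hc] at h
        injection h with _ h2
        have : FreeGroup.reduce t = t := by rw [hr, h2]
        refine List.isChain_cons.2 ⟨?_, ih this⟩
        intro z hz
        rw [← h2] at hz
        simp at hz
        subst hz
        exact hc

lemma chain_toWord (g : FreeGroup α) : List.Chain' R g.toWord :=
  chain_of_reduce_eq_self (FreeGroup.reduce_toWord g)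

lemma chain_invWord {u : List (α × Bool)} (h : List.Chain' R u) :
    List.Chain' R (invWord u) := by
  unfold invWord
  unfold List.Chain' at h ⊢
  rw [List.isChain_reverse, List.isChain_map]
  refine h.imp ?_
  rintro ⟨a, s⟩ ⟨b, t⟩ hab
  simp only [R, flip] at hab ⊢
  rintro ⟨h1, h2⟩
  exact hab ⟨h1.symm, by simpa using h2.symm⟩

lemma chain_replicate (M : ℕ) (c : α × Bool) : List.Chain' R (List.replicate M c) := by
  apply List.isChain_replicate_of_rel
  simp [R]

lemma of_zpow_eq_mk (a : α) (m : ℤ) :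
    (FreeGroup.of a) ^ m
      = FreeGroup.mk (List.replicate m.natAbs (a, decide (0 < m))) := by
  have hpow : ∀ k : ℕ, (FreeGroup.of a) ^ k = FreeGroup.mk (List.replicate k (a, true)) := by
    intro k
    rw [← FreeGroup.toWord_of_pow a k, FreeGroup.mk_toWord]
  cases m with
  | ofNat k =>
    rcases k with _ | k
    · exact FreeGroup.one_eq_mk
    · rw [Int.ofNat_eq_coe, zpow_natCast, hpow]
      have hna : ((k:ℤ)+1).natAbs = k+1 := by omega
      have hd : decide ((0:ℤ) < ((k:ℤ)+1)) = true := decide_eq_true (by positivity)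
      norm_num [hna, hd]
  | negSucc k =>
    rw [zpow_negSucc, hpow, FreeGroup.inv_mk]
    have hd : (decide (0 < Int.negSucc k)) = false :=
      decide_eq_false (not_lt.2 (Int.negSucc_lt_zero k).le)
    rw [hd]
    simp [FreeGroup.invRev, Int.natAbs_negSucc, List.map_replicate, List.reverse_replicate]

end Aux

namespace Aux

variable {α : Type*} [DecidableEq α]

lemma normal_form (a : α) (m : ℤ) (hm : m ≠ 0) :
    ∀ (N : ℕ) (g : FreeGroup α), g.toWord.length ≤ N →
    ∃ v : List (α × Bool),
      (g⁻¹ * FreeGroup.of a ^ m * g).toWord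
        = invWord v ++ List.replicate m.natAbs (a, decide (0 < m)) ++ v := by
  intro N
  induction N with
  | zero =>
    intro g hg
    refine ⟨[], ?_⟩
    have hg1 : g = 1 := FreeGroup.toWord_eq_nil_iff.1 (List.length_eq_zero_iff.1 (by omega))
    subst hg1
    rw [of_zpow_eq_mk]
    simp only [inv_one, one_mul, mul_one, invWord, List.map_nil, List.reverse_nil,
      List.nil_append, List.append_nil, FreeGroup.toWord_mk, FreeGroup.reduce_replicate]
  | succ N ih =>
    intro g hg
    rcases hu : g.toWord with _ | ⟨⟨b, s⟩, t⟩
    · refine ⟨[], ?_⟩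
      have hg1 : g = 1 := FreeGroup.toWord_eq_nil_iff.1 hu
      subst hg1
      rw [of_zpow_eq_mk]
      simp only [inv_one, one_mul, mul_one, invWord, List.map_nil, List.reverse_nil,
        List.nil_append, List.append_nil, FreeGroup.toWord_mk, FreeGroup.reduce_replicate]
    · have hchainU : List.Chain' R ((b, s) :: t) := hu ▸ chain_toWord g
      by_cases hb : b = a
      · -- strip the leading letter, which is a power of `a`
        subst hb
        set h := FreeGroup.mk t with hh
        have htred : FreeGroup.reduce t = t := reduce_eq_self_of_chain hchainU.tail
        have htw : h.toWord = t := by rw [hh, FreeGroup.toWord_mk, htred]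
        have hgmk : g = FreeGroup.mk [(b, s)] * h := by
          rw [hh, FreeGroup.mul_mk]
          conv_lhs => rw [← FreeGroup.mk_toWord (x := g), hu]
          rfl
        have hp : FreeGroup.mk [(b, s)] = (FreeGroup.of b) ^ (if s then (1:ℤ) else -1) := by
          cases s
          · simp only [if_neg Bool.false_ne_true, zpow_neg, zpow_one]
            rw [show (FreeGroup.of b) = FreeGroup.mk [(b, true)] from rfl, FreeGroup.inv_mk]
            rfl
          · simp only [if_pos rfl, zpow_one]
            rfl
        have hcomm : FreeGroup.mk [(b, s)] * (FreeGroup.of b) ^ m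
            = (FreeGroup.of b) ^ m * FreeGroup.mk [(b, s)] := by
          rw [hp]
          exact ((Commute.refl (FreeGroup.of b)).zpow_zpow _ m).eq
        have key : g⁻¹ * FreeGroup.of b ^ m * g = h⁻¹ * FreeGroup.of b ^ m * h := by
          rw [hgmk, mul_inv_rev]
          have : (FreeGroup.mk [(b, s)])⁻¹ * FreeGroup.of b ^ m * FreeGroup.mk [(b, s)]
              = FreeGroup.of b ^ m := by
            rw [mul_assoc, ← hcomm, ← mul_assoc, inv_mul_cancel, one_mul]
          calc h⁻¹ * (FreeGroup.mk [(b, s)])⁻¹ * FreeGroup.of b ^ m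
                * (FreeGroup.mk [(b, s)] * h)
              = h⁻¹ * ((FreeGroup.mk [(b, s)])⁻¹ * FreeGroup.of b ^ m
                * FreeGroup.mk [(b, s)]) * h := by group
            _ = h⁻¹ * FreeGroup.of b ^ m * h := by rw [this]
        rw [key]
        refine ih h ?_
        rw [htw]
        have := congrArg List.length hu
        simp at this
        omega
      · -- no cancellation: the concatenation is already reduced
        refine ⟨(b, s) :: t, ?_⟩
        set u : List (α × Bool) := (b, s) :: t with hudef
        set c : α × Bool := (a, decide (0 < m)) with hc
        set B : List (α × Bool) := List.replicate m.natAbs c with hB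
        have hw : g⁻¹ * FreeGroup.of a ^ m * g = FreeGroup.mk (invWord u ++ B ++ u) := by
          conv_lhs => rw [← FreeGroup.mk_toWord (x := g), hu]
          rw [FreeGroup.inv_mk, of_zpow_eq_mk, ← hc, ← hB,
            FreeGroup.mul_mk, FreeGroup.mul_mk, invWord_eq_invRev]
        obtain ⟨M', hM⟩ : ∃ M', m.natAbs = M' + 1 :=
          Nat.exists_eq_succ_of_ne_zero (Int.natAbs_ne_zero.2 hm)
        have hchain : List.Chain' R (invWord u ++ B ++ u) := by
          rw [List.append_assoc, List.Chain', List.isChain_append]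
          refine ⟨chain_invWord hchainU, ?_, ?_⟩
          · rw [List.isChain_append]
            refine ⟨chain_replicate _ _, hchainU, ?_⟩
            intro x hx y hy
            rw [hB, List.getLast?_replicate, if_neg (by omega)] at hx
            rw [hudef] at hy
            simp only [List.head?_cons, Option.mem_def, Option.some_inj] at hx hy
            subst hx; subst hy
            simp only [R, hc]
            rintro ⟨h1, -⟩
            exact hb h1.symm
          · intro x hx y hy
            rw [hudef] at hx
            simp only [invWord, List.getLast?_reverse, List.map_cons, List.head?_cons,
              Option.mem_def, Option.some_inj] at hx
            subst hx
            rw [hB, hM, List.replicate_succ, List.cons_append, List.head?_cons] at hy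
            simp only [Option.mem_def, Option.some_inj] at hy
            subst hy
            simp only [R, hc]
            rintro ⟨h1, -⟩
            exact hb h1
        rw [hw, FreeGroup.toWord_mk, reduce_eq_self_of_chain hchain]

end Aux

/-- In the free group on `n ≥ 2` generators, the union of all conjugates of the cyclic
subgroup `B = ⟨e₁⟩ = C(e₁)` is negligible. -/
theorem negligible_union_conjugates (n : ℕ) (hn : 2 ≤ n) :
    Negligible {x : FreeGroup (Fin n) | ∃ (g : FreeGroup (Fin n)) (m : ℤ),
      x = g⁻¹ * (FreeGroup.of (⟨0, by omega⟩ : Fin n)) ^ m * g} := by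
  refine ⟨2, fun ε hε => ?_⟩
  set a : Fin n := ⟨0, by omega⟩ with ha
  set L₀ : ℕ := max 1 ⌈ε⁻¹⌉₊ with hL₀
  have hfin : {w : FreeGroup (Fin n) | w.toWord.length ≤ L₀}.Finite := by
    have hsub : {w : FreeGroup (Fin n) | w.toWord.length ≤ L₀}
        ⊆ FreeGroup.mk '' {l | l.length ≤ L₀} :=
      fun w hw => ⟨w.toWord, hw, FreeGroup.mk_toWord⟩
    exact ((List.finite_length_le _ L₀).image _).subset hsub
  refine ⟨hfin.toFinset, ?_⟩
  rintro w ⟨g, m, rfl⟩ hwS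
  set w : FreeGroup (Fin n) := g⁻¹ * (FreeGroup.of a) ^ m * g with hw
  rw [Set.Finite.mem_toFinset, Set.mem_setOf_eq, not_le] at hwS
  -- hwS : L₀ < w.toWord.length
  have hm : m ≠ 0 := by
    rintro rfl
    have hw1 : w = 1 := by rw [hw]; group
    rw [hw1, FreeGroup.toWord_one] at hwS
    exact absurd hwS (by simp)
  obtain ⟨v, hv⟩ := Aux.normal_form a m hm g.toWord.length g le_rfl
  rw [← hw] at hv
  set c : Fin n × Bool := (a, decide (0 < m)) with hc
  set k : ℕ := v.length with hk
  set M : ℕ := m.natAbs with hM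
  set A : List (Fin n × Bool) := invWord v with hA
  set B : List (Fin n × Bool) := List.replicate M c with hB
  clear_value c k M A B
  have hM1 : 1 ≤ M := hM ▸ Int.natAbs_pos.2 hm
  have hkA : A.length = k := by rw [hA]; simp [invWord, hk]
  have hkB : B.length = M := by rw [hB]; simp
  have hlen : w.toWord.length = k + M + k := by
    rw [hv]
    simp only [List.length_append, hkA, hkB, ← hk]
    try omega
  have hBsucc : B = c :: List.replicate (M - 1) c := by
    rw [hB]
    have : M = (M - 1) + 1 := by omega
    conv_lhs => rw [this, List.replicate_succ]
  have hv' : w.toWord = A ++ (B ++ v) := by rw [hv, List.append_assoc]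
  have hv'' : w.toWord = (A ++ [c]) ++ (List.replicate (M - 1) c ++ v) := by
    rw [hv', hBsucc]; simp
  -- the four embedded subwords
  have hEv : (w.toWord.drop (k + M)).take v.length = v := by
    rw [hv, List.drop_left' (by simp [hkA, hkB]), List.take_length]
  have hEA : (w.toWord.drop 0).take A.length = A := by
    rw [hv', List.drop_zero, List.take_left]
  have hEB1 : (w.toWord.drop k).take (List.replicate (M - 1) c).length
      = List.replicate (M - 1) c := by
    rw [hv', List.drop_left' hkA, List.length_replicate,
      List.take_append_of_le_length (by rw [hkB]; omega), hB, List.take_replicate]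
    congr 1
    omega
  have hEB2 : (w.toWord.drop (k + 1)).take (List.replicate (M - 1) c).length
      = List.replicate (M - 1) c := by
    rw [hv'', List.drop_left' (by simp [hkA]), List.take_left]
  have hεlen : (1 : ℝ) ≤ ε * w.toWord.length := by
    have h1 : (ε⁻¹ : ℝ) ≤ (L₀ : ℕ) := by
      refine le_trans (Nat.le_ceil _) ?_
      exact_mod_cast le_max_right 1 ⌈ε⁻¹⌉₊
    have h2 : (ε⁻¹ : ℝ) < (w.toWord.length : ℝ) :=
      lt_of_le_of_lt h1 (by exact_mod_cast hwS)
    calc (1 : ℝ) = ε * ε⁻¹ := (mul_inv_cancel₀ hε.ne').symm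
      _ ≤ ε * w.toWord.length := mul_le_mul_of_nonneg_left h2.le hε.le
  have hL1 : 1 ≤ L₀ := le_max_left _ _
  have hpropV : 1 ≤ k → IsProperEmbeddedSubword w (((0, A), (k + M, v))).1 ∧ IsProperEmbeddedSubword w (((0, A), (k + M, v))).2 := by
    intro h1k
    refine ⟨⟨⟨?_, hEA⟩, ?_⟩, ⟨⟨?_, ?_⟩, ?_⟩⟩
    · exact List.ne_nil_of_length_pos (show 0 < A.length by omega)
    · show A.length < w.toWord.length
      rw [hlen, hkA]; omega
    · exact List.ne_nil_of_length_pos (show 0 < v.length by omega)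
    · exact hEv
    · show v.length < w.toWord.length
      rw [hlen, ← hk]; omega
  have hpropC : 2 ≤ M → IsProperEmbeddedSubword w (((k, List.replicate (M - 1) c), (k + 1, List.replicate (M - 1) c))).1 ∧ IsProperEmbeddedSubword w (((k, List.replicate (M - 1) c), (k + 1, List.replicate (M - 1) c))).2 := by
    intro h2M
    refine ⟨⟨⟨?_, hEB1⟩, ?_⟩, ⟨⟨?_, hEB2⟩, ?_⟩⟩
    · exact List.ne_nil_of_length_pos (show 0 < (List.replicate (M - 1) c).length by
        rw [List.length_replicate]; omega)
    · show (List.replicate (M - 1) c).length < w.toWord.length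
      rw [List.length_replicate, hlen]; omega
    · exact List.ne_nil_of_length_pos (show 0 < (List.replicate (M - 1) c).length by
        rw [List.length_replicate]; omega)
    · show (List.replicate (M - 1) c).length < w.toWord.length
      rw [List.length_replicate, hlen]; omega
  have hwordV : (((0, A), (k + M, v))).2.2 = (((0, A), (k + M, v))).1.2 ∨ (((0, A), (k + M, v))).2.2 = invWord (((0, A), (k + M, v))).1.2 := by
    right
    show v = invWord A
    rw [hA, Aux.invWord_eq_invRev, Aux.invWord_eq_invRev, FreeGroup.invRev_invRev]
  have hneV : (((0, A), (k + M, v))).1 ≠ (((0, A), (k + M, v))).2 := by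
    intro hEq
    have h1 : (0 : ℕ) = k + M := congrArg Prod.fst hEq
    omega
  have hneC : (((k, List.replicate (M - 1) c), (k + 1, List.replicate (M - 1) c))).1 ≠ (((k, List.replicate (M - 1) c), (k + 1, List.replicate (M - 1) c))).2 := by
    intro hEq
    have h1 : k = k + 1 := congrArg Prod.fst hEq
    omega
  by_cases hk0 : k = 0
  · -- w = e₁^m with M ≥ 2
    have hM2 : 2 ≤ M := by rw [hlen, hk0] at hwS; omega
    refine ⟨fun _ => (((k, List.replicate (M - 1) c), (k + 1, List.replicate (M - 1) c))), fun i => hpropC hM2, fun i => Or.inl rfl, fun i => hneC, ?_⟩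
    have hempty : {j : ℕ | j < w.toWord.length ∧
        ∀ i : Fin 2, ¬ CoversPos ((fun _ => (((k, List.replicate (M - 1) c), (k + 1, List.replicate (M - 1) c)))) i).1 j ∧ ¬ CoversPos ((fun _ => (((k, List.replicate (M - 1) c), (k + 1, List.replicate (M - 1) c)))) i).2 j}
        = ∅ := by
      ext j
      simp only [Set.mem_setOf_eq, Set.mem_empty_iff_false, iff_false, not_and]
      intro hj hcov
      obtain ⟨hc1, hc2⟩ := hcov 0
      rw [hlen, hk0] at hj
      simp only [CoversPos, List.length_replicate, not_and, not_lt] at hc1 hc2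
      omega
    rw [hempty]
    simp only [Set.ncard_empty, Nat.cast_zero]
    positivity
  · have hk1 : 1 ≤ k := by omega
    by_cases hM2 : 2 ≤ M
    · refine ⟨fun i => if i = 0 then (((0, A), (k + M, v))) else (((k, List.replicate (M - 1) c), (k + 1, List.replicate (M - 1) c))), ?_, ?_, ?_, ?_⟩
      · intro i
        by_cases hi : i = 0
        · simp only [hi, reduceIte]; exact hpropV hk1
        · simp only [if_neg hi]; exact hpropC hM2
      · intro i
        by_cases hi : i = 0
        · simp only [hi, reduceIte]; exact hwordV
        · simp only [if_neg hi]; exact Or.inl trivial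
      · intro i
        by_cases hi : i = 0
        · simp only [hi, reduceIte]; exact hneV
        · simp only [if_neg hi]; exact hneC
      · have hempty : {j : ℕ | j < w.toWord.length ∧
            ∀ i : Fin 2, ¬ CoversPos ((if i = 0 then (((0, A), (k + M, v))) else (((k, List.replicate (M - 1) c), (k + 1, List.replicate (M - 1) c))))).1 j
              ∧ ¬ CoversPos ((if i = 0 then (((0, A), (k + M, v))) else (((k, List.replicate (M - 1) c), (k + 1, List.replicate (M - 1) c))))).2 j} = ∅ := by
          ext j
          simp only [Set.mem_setOf_eq, Set.mem_empty_iff_false, iff_false, not_and]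
          intro hj hcov
          have h0 := hcov 0
          have h1 := hcov 1
          simp only [reduceIte, one_ne_zero, if_neg] at h0 h1
          obtain ⟨ha1, ha2⟩ := h0
          obtain ⟨hb1, hb2⟩ := h1
          rw [hlen] at hj
          simp only [CoversPos, List.length_replicate, not_and, not_lt,
            hkA, hk] at ha1 ha2 hb1 hb2
          omega
        rw [hempty]
        simp
        positivity
    · -- M = 1
      have hMeq : M = 1 := by omega
      refine ⟨fun _ => (((0, A), (k + M, v))), fun i => hpropV hk1, fun i => hwordV, fun i => hneV, ?_⟩
      have hsub : {j : ℕ | j < w.toWord.length ∧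
          ∀ i : Fin 2, ¬ CoversPos ((fun _ => (((0, A), (k + M, v)))) i).1 j ∧ ¬ CoversPos ((fun _ => (((0, A), (k + M, v)))) i).2 j}
          ⊆ {k} := by
        intro j hj
        obtain ⟨hjlen, hcov⟩ := hj
        obtain ⟨hc1, hc2⟩ := hcov 0
        rw [hlen] at hjlen
        simp only [CoversPos, not_and, not_lt] at hc1 hc2
        simp only [Set.mem_singleton_iff]
        omega
      calc ({j : ℕ | j < w.toWord.length ∧
          ∀ i : Fin 2, ¬ CoversPos ((fun _ => (((0, A), (k + M, v)))) i).1 j ∧ ¬ CoversPos ((fun _ => (((0, A), (k + M, v)))) i).2 j}.ncard : ℝ)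
          ≤ (({k} : Set ℕ).ncard : ℝ) := by
            exact_mod_cast Set.ncard_le_ncard hsub (Set.finite_singleton k)
        _ = 1 := by simp
        _ ≤ ε * w.toWord.length := hεlen
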